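/- Let g be a metric on ℝⁿ that is log concave in the sense of Nakano (respectively Griffiths), and let f : ℝⁿ → ℝ be a strictly positive, twice differentiable log concave function. Then the metric f·g is log concave in the sense of Nakano (respectively Griffiths). -/

import Mathlib

open scoped ComplexOrder
open Matrix MeasureTheory

section Preamble

variable {ι : Type*} [Fintype ι] [DecidableEq ι] {r : ℕ}

/-- Partial derivative of a complex-valued function on `ι → ℝ` in direction `j`. -/
noncomputable def pdC (j : ι) (f : (ι → ℝ) → ℂ) (x : ι → ℝ) : ℂ :=
  fderiv ℝ f x (Pi.single j 1)

/-- Partial derivative of a real-valued function on `ι → ℝ` in direction `j`. -/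
noncomputable def pdR (j : ι) (f : (ι → ℝ) → ℝ) (x : ι → ℝ) : ℝ :=
  fderiv ℝ f x (Pi.single j 1)

/-- Entrywise partial derivative of a matrix-valued function. -/
noncomputable def mpd (j : ι) (g : (ι → ℝ) → Matrix (Fin r) (Fin r) ℂ) (x : ι → ℝ) :
    Matrix (Fin r) (Fin r) ℂ :=
  Matrix.of fun a b => pdC j (fun y => g y a b) x

/-- The curvature-type quantity `Θ_{jk} = ∂_{x_k}(g⁻¹ ∂_{x_j} g)`. -/
noncomputable def Theta (g : (ι → ℝ) → Matrix (Fin r) (Fin r) ℂ) (j k : ι) (x : ι → ℝ) :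
    Matrix (Fin r) (Fin r) ℂ :=
  mpd k (fun y => (g y)⁻¹ * mpd j g y) x

/-- The pairing `(u, v)_g = v* g u`. -/
noncomputable def ip (g : Matrix (Fin r) (Fin r) ℂ) (u v : Fin r → ℂ) : ℂ :=
  star v ⬝ᵥ g.mulVec u

/-- A metric: twice differentiable entries, Hermitian positive definite values. -/
def IsMetric (g : (ι → ℝ) → Matrix (Fin r) (Fin r) ℂ) : Prop :=
  (∀ x, (g x).PosDef) ∧ ∀ a b, ContDiff ℝ 2 fun x => g x a b

/-- Log concavity in the sense of Nakano. -/
def NakanoLogConcave (g : (ι → ℝ) → Matrix (Fin r) (Fin r) ℂ) : Prop :=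
  ∀ (x : ι → ℝ) (u : ι → Fin r → ℂ),
    ∑ j, ∑ k, ip (g x) ((Theta g j k x).mulVec (u j)) (u k) ≤ 0

/-- Log concavity in the sense of Griffiths. -/
def GriffithsLogConcave (g : (ι → ℝ) → Matrix (Fin r) (Fin r) ℂ) : Prop :=
  ∀ (x : ι → ℝ) (u : Fin r → ℂ) (v : ι → ℂ),
    ∑ j, ∑ k, ip (g x) ((Theta g j k x).mulVec u) u * (v j * star (v k)) ≤ 0

end Preamble


variable {n r : ℕ}

lemma det_diff {M : (Fin n → ℝ) → Matrix (Fin r) (Fin r) ℂ} {x : Fin n → ℝ}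
    (h : ∀ a b, DifferentiableAt ℝ (fun y => M y a b) x) :
    DifferentiableAt ℝ (fun y => (M y).det) x := by
  simp only [Matrix.det_apply]
  apply DifferentiableAt.fun_sum; intro σ _
  have : DifferentiableAt ℝ (fun y => ∏ i, M y (σ i) i) x :=
    (HasFDerivAt.finset_prod (fun i _ => (h (σ i) i).hasFDerivAt)).differentiableAt
  simpa [Units.smul_def, zsmul_eq_mul] using this.const_mul ((Equiv.Perm.sign σ : ℤ) : ℂ)

lemma inv_entry_diff {M : (Fin n → ℝ) → Matrix (Fin r) (Fin r) ℂ} {x : Fin n → ℝ}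
    (h : ∀ a b, DifferentiableAt ℝ (fun y => M y a b) x)
    (hdet : (M x).det ≠ 0) (a b : Fin r) :
    DifferentiableAt ℝ (fun y => (M y)⁻¹ a b) x := by
  have : ∀ y, (M y)⁻¹ a b = ((M y).det)⁻¹ * (M y).adjugate a b := by
    intro y
    rw [Matrix.inv_def, Matrix.smul_apply, Ring.inverse_eq_inv, smul_eq_mul]
  simp only [this, Matrix.adjugate_apply]
  refine ((det_diff h).inv hdet).mul (det_diff fun i k => ?_)
  simp only [Matrix.updateRow_apply]
  by_cases hib : i = b <;> simp [hib, differentiableAt_const, h]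

noncomputable def pdC' (j : Fin n) (f : (Fin n → ℝ) → ℂ) (x : Fin n → ℝ) : ℂ :=
  fderiv ℝ f x (Pi.single j 1)

lemma contDiff_pd {f : (Fin n → ℝ) → ℂ} (hf : ContDiff ℝ 2 f) (j : Fin n) :
    ContDiff ℝ 1 (fun y => fderiv ℝ f y (Pi.single j 1)) :=
  (hf.fderiv_right (by norm_num)).clm_apply contDiff_const

lemma contDiff_pdR {f : (Fin n → ℝ) → ℝ} (hf : ContDiff ℝ 2 f) (j : Fin n) :
    ContDiff ℝ 1 (fun y => fderiv ℝ f y (Pi.single j 1)) :=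
  (hf.fderiv_right (by norm_num)).clm_apply contDiff_const

lemma pd_ofReal {f : (Fin n → ℝ) → ℝ} {x : Fin n → ℝ} (hf : DifferentiableAt ℝ f x) (j : Fin n) :
    fderiv ℝ (fun y => (f y : ℂ)) x (Pi.single j 1) = (fderiv ℝ f x (Pi.single j 1) : ℂ) := by
  have h := (Complex.ofRealCLM.hasFDerivAt.comp x hf.hasFDerivAt)
  have h2 : HasFDerivAt (fun y => ((f y : ℂ))) (Complex.ofRealCLM.comp (fderiv ℝ f x)) x := h
  rw [h2.fderiv]; simp

lemma pd_mul {f g : (Fin n → ℝ) → ℂ} {x : Fin n → ℝ} (hf : DifferentiableAt ℝ f x)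
    (hg : DifferentiableAt ℝ g x) (j : Fin n) :
    fderiv ℝ (fun y => f y * g y) x (Pi.single j 1) =
      fderiv ℝ f x (Pi.single j 1) * g x + f x * fderiv ℝ g x (Pi.single j 1) := by
  rw [fderiv_fun_mul hf hg]; simp; ring

lemma pd_add {f g : (Fin n → ℝ) → ℂ} {x : Fin n → ℝ} (hf : DifferentiableAt ℝ f x)
    (hg : DifferentiableAt ℝ g x) (j : Fin n) :
    fderiv ℝ (fun y => f y + g y) x (Pi.single j 1) =
      fderiv ℝ f x (Pi.single j 1) + fderiv ℝ g x (Pi.single j 1) := by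
  rw [fderiv_fun_add hf hg]; simp

section ThetaCalc
variable {n r : ℕ} (g : (Fin n → ℝ) → Matrix (Fin r) (Fin r) ℂ)
  (hg : IsMetric g) (f : (Fin n → ℝ) → ℝ) (hfpos : ∀ x, 0 < f x) (hfC : ContDiff ℝ 2 f)

include hg hfpos hfC in
lemma theta_smul (j k : Fin n) (x : Fin n → ℝ) :
    Theta (fun y => (f y : ℂ) • g y) j k x =
      Theta g j k x +
        ((fderiv ℝ (fun y => fderiv ℝ f y (Pi.single j 1) / f y) x (Pi.single k 1) : ℝ) : ℂ) • 1 := by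
  have hfd : ∀ y, DifferentiableAt ℝ f y := fun y => (hfC.differentiable (by norm_num)).differentiableAt
  have hfd' : ∀ y, DifferentiableAt ℝ (fun z => (f z : ℂ)) y := fun y =>
    Complex.ofRealCLM.differentiable.differentiableAt.comp y (hfd y)
  have hge : ∀ (a b : Fin r) y, DifferentiableAt ℝ (fun z => g z a b) y := fun a b y =>
    ((hg.2 a b).differentiable (by norm_num)).differentiableAt
  have hge' : ∀ (a b : Fin r) y, DifferentiableAt ℝ (fun z => mpd j g z a b) y := fun a b y =>
    ((contDiff_pd (hg.2 a b) j).differentiable one_ne_zero).differentiableAt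
  have hdet : ∀ y, (g y).det ≠ 0 := fun y => (hg.1 y).det_pos.ne'
  have hfne : ∀ y, (f y : ℂ) ≠ 0 := fun y => by
    exact_mod_cast Complex.ofReal_ne_zero.mpr (hfpos y).ne'
  -- Step 1 : derivative of f•g
  have step1 : ∀ y, mpd j (fun z => (f z : ℂ) • g z) y =
      ((fderiv ℝ f y (Pi.single j 1) : ℝ) : ℂ) • g y + (f y : ℂ) • mpd j g y := by
    intro y
    ext a b
    simp only [mpd, Matrix.of_apply, pdC, Matrix.add_apply, Matrix.smul_apply, smul_eq_mul]
    rw [pd_mul (hfd' y) (hge a b y) j, pd_ofReal (hfd y) j]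
  -- Step 2 : the inner function
  have step2 : ∀ y, (((f y : ℂ) • g y)⁻¹ * mpd j (fun z => (f z : ℂ) • g z) y) =
      ((fderiv ℝ f y (Pi.single j 1) / f y : ℝ) : ℂ) • (1 : Matrix (Fin r) (Fin r) ℂ) +
        (g y)⁻¹ * mpd j g y := by
    intro y
    have hFinv : ((f y : ℂ) • g y)⁻¹ = (f y : ℂ)⁻¹ • (g y)⁻¹ := by
      refine Matrix.inv_eq_left_inv ?_
      rw [Matrix.smul_mul, Matrix.mul_smul, smul_smul, inv_mul_cancel₀ (hfne y), one_smul,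
        Matrix.nonsing_inv_mul _ ((hg.1 y).det_pos.ne'.isUnit)]
    rw [hFinv, step1 y]
    rw [mul_add, Matrix.smul_mul, Matrix.smul_mul, Matrix.mul_smul, Matrix.mul_smul,
      Matrix.nonsing_inv_mul _ ((hg.1 y).det_pos.ne'.isUnit), smul_smul, smul_smul,
      inv_mul_cancel₀ (hfne y), one_smul]
    congr 1
    push_cast
    rw [div_eq_inv_mul]
  -- Step 3 : differentiate
  have hnum : DifferentiableAt ℝ (fun y => fderiv ℝ f y (Pi.single j 1)) x :=
    (contDiff_pdR hfC j).differentiable one_ne_zero x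
  have hq : DifferentiableAt ℝ (fun y => fderiv ℝ f y (Pi.single j 1) / f y) x :=
    by simp only [div_eq_mul_inv]; exact hnum.mul ((hfd x).inv (hfpos x).ne')
  have hqC : DifferentiableAt ℝ (fun y => ((fderiv ℝ f y (Pi.single j 1) / f y : ℝ) : ℂ)) x :=
    Complex.ofRealCLM.differentiable.differentiableAt.comp x hq
  have hinner : ∀ (a b : Fin r), DifferentiableAt ℝ (fun y => ((g y)⁻¹ * mpd j g y) a b) x := by
    intro a b
    simp only [Matrix.mul_apply]
    exact DifferentiableAt.fun_sum fun c _ =>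
      (inv_entry_diff (fun a b => hge a b x) (hdet x) a c).mul (hge' c b x)
  have hfun : (fun y => (((f y : ℂ) • g y)⁻¹ * mpd j (fun z => (f z : ℂ) • g z) y)) =
      fun y => ((fderiv ℝ f y (Pi.single j 1) / f y : ℝ) : ℂ) • (1 : Matrix (Fin r) (Fin r) ℂ) +
        (g y)⁻¹ * mpd j g y := funext step2
  have key1 : ∀ (A B : (Fin n → ℝ) → Matrix (Fin r) (Fin r) ℂ),
      (∀ a b, DifferentiableAt ℝ (fun y => A y a b) x) →
      (∀ a b, DifferentiableAt ℝ (fun y => B y a b) x) →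
      mpd k (fun y => A y + B y) x = mpd k A x + mpd k B x := by
    intro A B hA hB
    ext a b
    simp only [mpd, Matrix.of_apply, pdC, Matrix.add_apply]
    exact pd_add (hA a b) (hB a b) k
  have key2 : mpd k (fun y => ((fderiv ℝ f y (Pi.single j 1) / f y : ℝ) : ℂ) •
      (1 : Matrix (Fin r) (Fin r) ℂ)) x =
      ((fderiv ℝ (fun y => fderiv ℝ f y (Pi.single j 1) / f y) x (Pi.single k 1) : ℝ) : ℂ) • 1 := by
    ext a b
    simp only [mpd, Matrix.of_apply, pdC, Matrix.smul_apply, smul_eq_mul]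
    rw [fderiv_mul_const hqC]
    simp only [ContinuousLinearMap.smul_apply, smul_eq_mul]
    rw [pd_ofReal hq k]
    ring
  show mpd k _ x = _
  rw [hfun, key1 _ _ (fun a b => by
      simp only [Matrix.smul_apply, smul_eq_mul]; exact hqC.mul_const _) hinner, key2]
  have h2 : mpd k (fun y => (g y)⁻¹ * mpd j g y) x = Theta g j k x := rfl
  rw [h2, add_comm]

end ThetaCalc

section Hessian
variable {n : ℕ}

lemma deriv_nonpos_of_antitone {ψ : ℝ → ℝ} {d t : ℝ} (h : Antitone ψ)
    (hd : HasDerivAt ψ d t) : d ≤ 0 := by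
  have htend := hasDerivAt_iff_tendsto_slope.mp hd
  have h2 : Filter.Tendsto (slope ψ t) (nhdsWithin t (Set.Ioi t)) (nhds d) :=
    htend.mono_left (nhdsWithin_mono t fun u hu => ne_of_gt hu)
  refine le_of_tendsto h2 ?_
  filter_upwards [self_mem_nhdsWithin] with u hu
  have : ψ u ≤ ψ t := h (le_of_lt hu)
  rw [slope_def_field]
  apply div_nonpos_of_nonpos_of_nonneg <;> [linarith; linarith [Set.mem_Ioi.mp hu]]

variable (f : (Fin n → ℝ) → ℝ) (hfpos : ∀ x, 0 < f x) (hfC : ContDiff ℝ 2 f)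
  (hflc : ConcaveOn ℝ Set.univ fun x => Real.log (f x))

include hfpos hfC hflc in
lemma hessian_decomp (x : Fin n → ℝ) :
    ∃ D : Matrix (Fin n) (Fin n) ℝ, ∀ j k : Fin n,
      fderiv ℝ (fun y => fderiv ℝ f y (Pi.single j 1) / f y) x (Pi.single k 1) =
        -∑ l, D l j * D l k := by
  classical
  set L : (Fin n → ℝ) → ℝ := fun y => Real.log (f y) with hLdef
  have hfd : ∀ y, DifferentiableAt ℝ f y := fun y =>
    (hfC.differentiable (by norm_num)).differentiableAt
  have hL : ContDiff ℝ 2 L := by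
    rw [contDiff_iff_contDiffAt]
    intro y
    exact (Real.contDiffAt_log.mpr (hfpos y).ne').comp y hfC.contDiffAt
  have hLd : ∀ y, DifferentiableAt ℝ L y := fun y =>
    (hL.differentiable (by norm_num)).differentiableAt
  have hL1 : ∀ y, HasFDerivAt L ((f y)⁻¹ • fderiv ℝ f y) y := fun y =>
    (Real.hasDerivAt_log (hfpos y).ne').comp_hasFDerivAt y (hfd y).hasFDerivAt
  have pd_log : ∀ (j : Fin n) y, fderiv ℝ f y (Pi.single j 1) / f y =
      fderiv ℝ L y (Pi.single j 1) := by
    intro j y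
    rw [(hL1 y).fderiv]
    simp [div_eq_inv_mul]
  have hLfd : DifferentiableAt ℝ (fderiv ℝ L) x :=
    ((hL.fderiv_right (le_refl 2 : (1:WithTop ℕ∞) + 1 ≤ 2)).differentiable one_ne_zero).differentiableAt
  set B : (Fin n → ℝ) →L[ℝ] (Fin n → ℝ) →L[ℝ] ℝ := fderiv ℝ (fderiv ℝ L) x with hBdef
  -- c j k = B (e k) (e j)
  have claim1 : ∀ j k : Fin n,
      fderiv ℝ (fun y => fderiv ℝ f y (Pi.single j 1) / f y) x (Pi.single k 1) =
        B (Pi.single k 1) (Pi.single j 1) := by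
    intro j k
    have heq : (fun y => fderiv ℝ f y (Pi.single j 1) / f y) =
        fun y => (fderiv ℝ L y) (Pi.single j 1) := funext fun y => pd_log j y
    rw [heq, fderiv_clm_apply hLfd (differentiableAt_const _)]
    simp [hBdef]
  have hsymm : ∀ v w, B v w = B w v := fun v w =>
    (hL.contDiffAt.isSymmSndFDerivAt (by norm_num)) v w
  -- B w w ≤ 0
  have claim3 : ∀ w : Fin n → ℝ, B w w ≤ 0 := by
    intro w
    set γ : ℝ → (Fin n → ℝ) := fun t => x + t • w with hγdef
    have hγ : ∀ t : ℝ, HasDerivAt γ w t := by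
      intro t
      have h1 : HasDerivAt (fun t : ℝ => t • w) ((1:ℝ) • w) t := (hasDerivAt_id t).smul_const w
      simpa [hγdef] using h1.const_add x
    set φ : ℝ → ℝ := fun t => L (γ t) with hφdef
    have hφ' : ∀ t, HasDerivAt φ (fderiv ℝ L (γ t) w) t := fun t =>
      ((hLd (γ t)).hasFDerivAt).comp_hasDerivAt t (hγ t)
    have hφc : ConcaveOn ℝ Set.univ φ := by
      have hA : ConcaveOn ℝ ((AffineMap.lineMap x (x + w) : ℝ →ᵃ[ℝ] (Fin n → ℝ)) ⁻¹' Set.univ)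
          ((fun y => Real.log (f y)) ∘ (AffineMap.lineMap x (x + w))) := hflc.comp_affineMap _
      have : ((fun y => Real.log (f y)) ∘ (AffineMap.lineMap x (x + w))) = φ := by
        funext t
        simp [AffineMap.lineMap_apply, hφdef, hγdef, hLdef, add_comm]
      rwa [Set.preimage_univ, this] at hA
    set ψ : ℝ → ℝ := fun t => fderiv ℝ L (γ t) w with hψdef
    have hψanti : Antitone ψ := by
      have h1 := hφc.antitoneOn_deriv fun y _ => (hφ' y).differentiableAt
      have h2 : deriv φ = ψ := funext fun t => (hφ' t).deriv
      rw [h2] at h1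
      intro s u hsu
      exact h1 (by simp) (by simp) hsu
    have hψd : HasDerivAt ψ (B w w) 0 := by
      have h0 : γ 0 = x := by simp [hγdef]
      have h1 : HasFDerivAt (fderiv ℝ L) B (γ 0) := by rw [h0]; exact hLfd.hasFDerivAt
      have h2 : HasDerivAt (fun t => fderiv ℝ L (γ t)) (B w) 0 := h1.comp_hasDerivAt 0 (hγ 0)
      have h3 := h2.clm_apply (hasDerivAt_const 0 w)
      simpa using h3
    exact deriv_nonpos_of_antitone hψanti hψd
  have hw : ∀ w : Fin n → ℝ, B w w =
      ∑ k, ∑ j, w k * w j * B (Pi.single j 1) (Pi.single k 1) := by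
    intro w
    have hw' : w = ∑ i : Fin n, w i • (Pi.single i 1 : Fin n → ℝ) := by
      funext a
      simp [Finset.sum_apply, Pi.single_apply]
    conv_lhs => rw [hw']
    simp only [map_sum, ContinuousLinearMap.sum_apply]
    rw [Finset.sum_comm]
    refine Finset.sum_congr rfl fun k _ => Finset.sum_congr rfl fun j _ => ?_
    simp only [_root_.map_smul, ContinuousLinearMap.smul_apply, smul_eq_mul]
    rw [hsymm (Pi.single k 1) (Pi.single j 1)]
    ring
  set C : Matrix (Fin n) (Fin n) ℝ :=
    Matrix.of fun j k => B (Pi.single k 1) (Pi.single j 1) with hCdef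
  have hpsd : (-C).PosSemidef := by
    refine .of_dotProduct_mulVec_nonneg ?_ ?_
    · ext i j
      simp [Matrix.conjTranspose_apply, hCdef, hsymm (Pi.single j 1) (Pi.single i 1)]
    · intro w
      have hquad : (star w) ⬝ᵥ ((-C).mulVec w) = -(B w w) := by
        rw [hw w]
        simp only [star_trivial, Matrix.mulVec, dotProduct, Matrix.neg_apply,
          hCdef, Matrix.of_apply, Finset.mul_sum, neg_mul, mul_neg, Finset.sum_neg_distrib]
        rw [neg_eq_iff_eq_neg, neg_neg]
        refine Finset.sum_congr rfl fun a _ => Finset.sum_congr rfl fun b _ => by ring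
      rw [hquad]
      exact neg_nonneg.mpr (claim3 w)
  obtain ⟨D, hD⟩ : ∃ D : Matrix (Fin n) (Fin n) ℝ, -C = Dᴴ * D := by
    open scoped MatrixOrder in exact CStarAlgebra.nonneg_iff_eq_star_mul_self.mp hpsd.nonneg
  refine ⟨D, fun j k => ?_⟩
  have hCjk : C j k = -∑ l, D l j * D l k := by
    have : C j k = -((-C) j k) := by simp
    rw [this, hD]
    simp [Matrix.mul_apply, Matrix.conjTranspose_apply]
  rw [claim1 j k]
  exact hCjk ▸ rfl

end Hessian

section Gram
variable {n r : ℕ}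

lemma sum_dotProduct' {κ : Type*} (s : Finset κ) (x : κ → Fin r → ℂ) (y : Fin r → ℂ) :
    (∑ k ∈ s, x k) ⬝ᵥ y = ∑ k ∈ s, (x k ⬝ᵥ y) := by
  simp only [dotProduct, Finset.sum_apply, Finset.sum_mul]
  exact Finset.sum_comm

lemma dotProduct_sum' {κ : Type*} (s : Finset κ) (y : Fin r → ℂ) (x : κ → Fin r → ℂ) :
    (y ⬝ᵥ ∑ k ∈ s, x k) = ∑ k ∈ s, (y ⬝ᵥ x k) := by
  simp only [dotProduct, Finset.sum_apply, Finset.mul_sum]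
  exact Finset.sum_comm

lemma ip_gram (M : Matrix (Fin r) (Fin r) ℂ) (c : Fin n → ℂ) (u : Fin n → Fin r → ℂ) :
    ip M (∑ j, c j • u j) (∑ k, c k • u k) =
      ∑ k, ∑ j, star (c k) * c j * ip M (u j) (u k) := by
  unfold ip
  have h1 : M.mulVec (∑ j, c j • u j) = ∑ j, c j • M.mulVec (u j) := by
    simp only [← Matrix.mulVecLin_apply, map_sum, _root_.map_smul]
  have h2 : star (∑ k, c k • u k) = ∑ k : Fin n, star (c k) • star (u k) := by
    rw [star_sum]
    exact Finset.sum_congr rfl fun k _ => star_smul _ _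
  rw [h1, h2, sum_dotProduct']
  refine Finset.sum_congr rfl fun k _ => ?_
  rw [smul_dotProduct, dotProduct_sum', Finset.smul_sum]
  refine Finset.sum_congr rfl fun j _ => ?_
  rw [dotProduct_smul]
  simp only [smul_eq_mul]
  ring

lemma ip_smul_smul (M : Matrix (Fin r) (Fin r) ℂ) (a b : ℂ) (w z : Fin r → ℂ) :
    ip M (a • w) (b • z) = a * star b * ip M w z := by
  unfold ip
  rw [Matrix.mulVec_smul, dotProduct_smul, star_smul, smul_dotProduct]
  simp only [smul_eq_mul]
  ring

lemma key_nonpos (M : Matrix (Fin r) (Fin r) ℂ) (hM : M.PosSemidef)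
    (D : Matrix (Fin n) (Fin n) ℝ) (u : Fin n → Fin r → ℂ) :
    ∑ j, ∑ k, ((-∑ l, D l j * D l k : ℝ) : ℂ) * ip M (u j) (u k) ≤ 0 := by
  have this1 : ∀ l, ip M (∑ j, ((D l j : ℝ) : ℂ) • u j) (∑ k, ((D l k : ℝ) : ℂ) • u k) =
      ∑ j, ∑ k, ((D l j : ℝ) : ℂ) * ((D l k : ℝ) : ℂ) * ip M (u j) (u k) := by
    intro l
    rw [ip_gram, Finset.sum_comm]
    refine Finset.sum_congr rfl fun j _ => Finset.sum_congr rfl fun k _ => ?_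
    rw [Complex.star_def, Complex.conj_ofReal]
    ring
  have hstep : ∑ j, ∑ k, ((-∑ l, D l j * D l k : ℝ) : ℂ) * ip M (u j) (u k) =
      -∑ l, ip M (∑ j, ((D l j : ℝ) : ℂ) • u j) (∑ k, ((D l k : ℝ) : ℂ) • u k) := by
    have stepA : ∑ j, ∑ k, ((-∑ l, D l j * D l k : ℝ) : ℂ) * ip M (u j) (u k) =
        ∑ j, ∑ k, ∑ l, -(((D l j : ℝ) : ℂ) * ((D l k : ℝ) : ℂ) * ip M (u j) (u k)) := by
      refine Finset.sum_congr rfl fun j _ => Finset.sum_congr rfl fun k _ => ?_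
      push_cast
      rw [neg_mul, Finset.sum_mul, ← Finset.sum_neg_distrib]
    rw [stepA]
    rw [Finset.sum_congr rfl fun j (_ : j ∈ Finset.univ) =>
      (Finset.sum_comm : ∑ k : Fin n, ∑ l : Fin n,
        -(((D l j : ℝ) : ℂ) * ((D l k : ℝ) : ℂ) * ip M (u j) (u k)) = _)]
    rw [Finset.sum_comm, ← Finset.sum_neg_distrib]
    refine Finset.sum_congr rfl fun l _ => ?_
    rw [this1 l, ← Finset.sum_neg_distrib]
    refine Finset.sum_congr rfl fun j' _ => ?_
    rw [← Finset.sum_neg_distrib]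
  rw [hstep, neg_nonpos]
  exact Finset.sum_nonneg fun l _ => hM.dotProduct_mulVec_nonneg _

end Gram

theorem statement6 {n r : ℕ} (g : (Fin n → ℝ) → Matrix (Fin r) (Fin r) ℂ)
    (hg : IsMetric g) (f : (Fin n → ℝ) → ℝ) (hfpos : ∀ x, 0 < f x)
    (hfC : ContDiff ℝ 2 f) (hflc : ConcaveOn ℝ Set.univ fun x => Real.log (f x)) :
    (NakanoLogConcave g → NakanoLogConcave fun x => (f x : ℂ) • g x) ∧
    (GriffithsLogConcave g → GriffithsLogConcave fun x => (f x : ℂ) • g x) := by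
  have hterm : ∀ (x : Fin n → ℝ) (D : Matrix (Fin n) (Fin n) ℝ),
      (∀ j k, Theta (fun y => (f y : ℂ) • g y) j k x =
        Theta g j k x + ((-∑ l, D l j * D l k : ℝ) : ℂ) • 1) →
      ∀ (w v : Fin r → ℂ) (j k : Fin n),
        ip ((f x : ℂ) • g x) ((Theta (fun y => (f y : ℂ) • g y) j k x).mulVec w) v =
          (f x : ℂ) * (ip (g x) ((Theta g j k x).mulVec w) v +
            ((-∑ l, D l j * D l k : ℝ) : ℂ) * ip (g x) w v) := by
    intro x D hθ w v j k
    rw [hθ j k]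
    unfold ip
    simp only [Matrix.add_mulVec, Matrix.smul_mulVec, Matrix.one_mulVec,
      Matrix.mulVec_add, Matrix.mulVec_smul, dotProduct_add,
      dotProduct_smul, smul_eq_mul]
    ring
  have hfle : ∀ x, (0 : ℂ) ≤ (f x : ℂ) := by
    intro x
    rw [Complex.zero_le_real]
    exact (hfpos x).le
  have hmul_nonpos : ∀ (x : Fin n → ℝ) (S : ℂ), S ≤ 0 → (f x : ℂ) * S ≤ 0 := by
    intro x S hS
    have h := mul_nonneg (hfle x) (neg_nonneg.mpr hS)
    rw [mul_neg] at h
    exact neg_nonneg.mp h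
  constructor
  · intro hN x u
    obtain ⟨D, hD⟩ := hessian_decomp f hfpos hfC hflc x
    have hθ : ∀ j k, Theta (fun y => (f y : ℂ) • g y) j k x =
        Theta g j k x + ((-∑ l, D l j * D l k : ℝ) : ℂ) • 1 := fun j k => by
      rw [theta_smul g hg f hfpos hfC j k x, hD j k]
    have hsum : ∑ j, ∑ k,
        ip ((f x : ℂ) • g x) ((Theta (fun y => (f y : ℂ) • g y) j k x).mulVec (u j)) (u k) =
        (f x : ℂ) * ((∑ j, ∑ k, ip (g x) ((Theta g j k x).mulVec (u j)) (u k)) +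
          ∑ j, ∑ k, ((-∑ l, D l j * D l k : ℝ) : ℂ) * ip (g x) (u j) (u k)) := by
      rw [← Finset.sum_add_distrib]
      rw [Finset.mul_sum]
      refine Finset.sum_congr rfl fun j _ => ?_
      rw [← Finset.sum_add_distrib, Finset.mul_sum]
      refine Finset.sum_congr rfl fun k _ => ?_
      exact hterm x D hθ (u j) (u k) j k
    rw [hsum]
    exact hmul_nonpos x _ (add_nonpos (hN x u)
      (key_nonpos (g x) (hg.1 x).posSemidef D u))
  · intro hG x u v
    obtain ⟨D, hD⟩ := hessian_decomp f hfpos hfC hflc x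
    have hθ : ∀ j k, Theta (fun y => (f y : ℂ) • g y) j k x =
        Theta g j k x + ((-∑ l, D l j * D l k : ℝ) : ℂ) • 1 := fun j k => by
      rw [theta_smul g hg f hfpos hfC j k x, hD j k]
    have hsum : ∑ j, ∑ k,
        ip ((f x : ℂ) • g x) ((Theta (fun y => (f y : ℂ) • g y) j k x).mulVec u) u *
          (v j * star (v k)) =
        (f x : ℂ) * ((∑ j, ∑ k, ip (g x) ((Theta g j k x).mulVec u) u * (v j * star (v k))) +
          ∑ j, ∑ k, ((-∑ l, D l j * D l k : ℝ) : ℂ) * ip (g x) (v j • u) (v k • u)) := by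
      rw [← Finset.sum_add_distrib, Finset.mul_sum]
      refine Finset.sum_congr rfl fun j _ => ?_
      rw [← Finset.sum_add_distrib, Finset.mul_sum]
      refine Finset.sum_congr rfl fun k _ => ?_
      rw [hterm x D hθ u u j k, ip_smul_smul]
      ring
    rw [hsum]
    exact hmul_nonpos x _ (add_nonpos (hG x u v)
      (key_nonpos (g x) (hg.1 x).posSemidef D (fun j => v j • u)))
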